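/- Suppose the scalars u_t ∈ ℝ and λ_t > 0 (t = 1,…,T) satisfy the Afriat inequalities u_τ − u_t − λ_t p_t·(x_τ − x_t) ≤ 0 for all t, τ ∈ {1,…,T}, and let u(x) = min_{t} { u_t + λ_t p_t·(x − x_t) }. Then the dataset D = {(p_t, x_t)} satisfies the Generalized Axiom of Revealed Preference (GARP): for every k ≤ T, if p_t·x_t ≥ p_t·x_{t+1} for all t ≤ k−1, then p_k·x_k ≤ p_k·x_1. -/
import Mathlib


/-- Dot product of two vectors in `ℝ^m`. -/
def dotp {m : ℕ} (p x : Fin m → ℝ) : ℝ := ∑ i, p i * x i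

/-- The Generalized Axiom of Revealed Preference: for every `k ≤ T`, if
`p t ⬝ x t ≥ p t ⬝ x (t+1)` for all `t ≤ k - 1`, then `p k ⬝ x k ≤ p k ⬝ x 1`. -/
def GARP {m T : ℕ} (p x : Fin T → Fin m → ℝ) : Prop :=
  ∀ k : Fin T,
    (∀ t : Fin T, (ht : t < k) →
      dotp (p t) (x ⟨t.val + 1, lt_of_le_of_lt (Nat.succ_le_of_lt ht) k.isLt⟩)
        ≤ dotp (p t) (x t)) →
    dotp (p k) (x k) ≤ dotp (p k) (x ⟨0, lt_of_le_of_lt (Nat.zero_le k.val) k.isLt⟩)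

lemma dotp_sub {m : ℕ} (p a b : Fin m → ℝ) :
    ∑ i, p i * (a i - b i) = dotp p a - dotp p b := by
  simp [dotp, mul_sub, Finset.sum_sub_distrib]

/-- If the Afriat inequalities have a feasible solution with positive
multipliers, the dataset satisfies GARP. -/
theorem afriat_inequalities_imply_GARP {m T : ℕ}
    (p x : Fin T → Fin m → ℝ)
    (hp : ∀ t i, 0 < p t i)
    (u lam : Fin T → ℝ)
    (hlam : ∀ t, 0 < lam t)
    (hAfriat : ∀ t τ : Fin T,
      u τ - u t - lam t * ∑ i, p t i * (x τ i - x t i) ≤ 0) :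
    GARP p x := by
  intro k hk
  have key : ∀ n : ℕ, (hn : n ≤ k.val) →
      u ⟨n, lt_of_le_of_lt hn k.isLt⟩ ≤ u ⟨0, lt_of_le_of_lt (Nat.zero_le _) k.isLt⟩ := by
    intro n
    induction n with
    | zero => intro _; exact le_refl _
    | succ n ih =>
      intro hn
      have hn' : n ≤ k.val := Nat.le_of_succ_le hn
      have hlt : (⟨n, lt_of_le_of_lt hn' k.isLt⟩ : Fin T) < k := hn
      have hstep := hk ⟨n, lt_of_le_of_lt hn' k.isLt⟩ hlt
      have hA := hAfriat ⟨n, lt_of_le_of_lt hn' k.isLt⟩ ⟨n + 1, lt_of_le_of_lt hn k.isLt⟩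
      rw [dotp_sub] at hA
      have hl := hlam (⟨n, lt_of_le_of_lt hn' k.isLt⟩ : Fin T)
      have h1 : u ⟨n + 1, lt_of_le_of_lt hn k.isLt⟩ ≤ u ⟨n, lt_of_le_of_lt hn' k.isLt⟩ := by
        nlinarith [hstep, hA, hl]
      exact le_trans h1 (ih hn')
  have huk : u k ≤ u ⟨0, lt_of_le_of_lt (Nat.zero_le _) k.isLt⟩ := by
    have := key k.val (le_refl _)
    simpa using this
  have hA := hAfriat k ⟨0, lt_of_le_of_lt (Nat.zero_le _) k.isLt⟩
  rw [dotp_sub] at hA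
  have hl := hlam k
  nlinarith [hA, huk, hl]
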